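/- Let G be a compact Hausdorff topological group with Haar probability measure μ, let r ≥ 1, and let π : G → U(V) be a continuous unitary representation of G on a nonzero finite-dimensional complex inner product space V. Define τ_{G,π}(w) = ∫_{G^r} tr(π(w(g))) dμ^r(g) for w ∈ F_r. Then τ_{G,π} is a positive definite function on F_r: for every finite subset S ⊆ F_r and every function α : F_r → ℂ, the sum ∑_{w,w'∈S} τ_{G,π}(w' w⁻¹) α(w') conj(α(w)) is a nonnegative real number. -/

import Mathlib

open MeasureTheory ComplexOrder

/-- A function `τ : Γ → ℂ` on a group is positive definite if for every finite subset
`S ⊆ Γ` and every `α : Γ → ℂ`, the sum `∑_{γ,γ'∈S} τ(γ'γ⁻¹) α(γ') conj(α(γ))` is a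
nonnegative real number (i.e. `≥ 0` in the complex order). -/
def IsPositiveDefinite {Γ : Type*} [Group Γ] (τ : Γ → ℂ) : Prop :=
  ∀ (S : Finset Γ) (a : Γ → ℂ),
    0 ≤ ∑ γ ∈ S, ∑ γ' ∈ S, τ (γ' * γ⁻¹) * a γ' * (starRingEnd ℂ) (a γ)

section Aux

set_option linter.unusedSectionVars false

variable {G : Type*} [Group G] [TopologicalSpace G] [IsTopologicalGroup G]
    [CompactSpace G] [T2Space G] [MeasurableSpace G] [BorelSpace G]
    {V : Type*} [NormedAddCommGroup V] [InnerProductSpace ℂ V] [FiniteDimensional ℂ V]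

/-- The trace of `A A*` is nonnegative (in the complex order). -/
lemma aux_trace_nonneg (A : V →L[ℂ] V) :
    0 ≤ LinearMap.trace ℂ V ((A * star A : V →L[ℂ] V) : V →ₗ[ℂ] V) := by
  let b := stdOrthonormalBasis ℂ V
  rw [LinearMap.trace_eq_matrix_trace ℂ b.toBasis, Matrix.trace]
  apply Finset.sum_nonneg
  intro i _
  rw [Matrix.diag_apply, LinearMap.toMatrix_apply]
  have h1 : (b.toBasis.repr (((A * star A : V →L[ℂ] V) : V →ₗ[ℂ] V) (b.toBasis i))) i
      = inner ℂ (b i) ((A * star A : V →L[ℂ] V) (b i)) := by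
    rw [b.coe_toBasis]
    exact b.repr_apply_apply _ i
  rw [h1]
  have h2 : ((A * star A : V →L[ℂ] V) (b i)) = A ((ContinuousLinearMap.adjoint A) (b i)) := by
    rw [ContinuousLinearMap.star_eq_adjoint]; rfl
  rw [h2, ← ContinuousLinearMap.adjoint_inner_left, inner_self_eq_norm_sq_to_K]
  positivity

/-- The map `g ↦ π(w(g))` is strongly measurable. -/
lemma aux_phi_stronglyMeasurable (r : ℕ) (π : G →* unitary (V →L[ℂ] V))
    (hπ : Continuous fun g : G => (π g : V →L[ℂ] V)) (w : FreeGroup (Fin r)) :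
    StronglyMeasurable (fun g : Fin r → G => (π (FreeGroup.lift g w) : V →L[ℂ] V)) := by
  induction w using FreeGroup.induction_on with
  | C1 =>
      have : (fun g : Fin r → G => (π (FreeGroup.lift g 1) : V →L[ℂ] V)) = fun _ => 1 := by
        funext g; rw [map_one, map_one]; rfl
      rw [this]; exact stronglyMeasurable_const
  | of i =>
      have : (fun g : Fin r → G => (π (FreeGroup.lift g (FreeGroup.of i)) : V →L[ℂ] V))
          = (fun x : G => (π x : V →L[ℂ] V)) ∘ (fun g : Fin r → G => g i) := by
        funext g
        show (π (FreeGroup.lift g (FreeGroup.of i)) : V →L[ℂ] V) = _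
        rw [FreeGroup.lift_apply_of]; rfl
      rw [this]
      exact hπ.stronglyMeasurable.comp_measurable (measurable_pi_apply i)
  | inv_of i h =>
      have : (fun g : Fin r → G => (π (FreeGroup.lift g (FreeGroup.of i)⁻¹) : V →L[ℂ] V))
          = fun g => star (π (FreeGroup.lift g (FreeGroup.of i)) : V →L[ℂ] V) := by
        funext g; rw [map_inv, map_inv, ← Unitary.star_eq_inv, Unitary.coe_star]
      rw [this]
      exact continuous_star.comp_stronglyMeasurable h
  | mul x y hx hy =>
      have : (fun g : Fin r → G => (π (FreeGroup.lift g (x * y)) : V →L[ℂ] V))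
          = fun g => (π (FreeGroup.lift g x) : V →L[ℂ] V) *
              (π (FreeGroup.lift g y) : V →L[ℂ] V) := by
        funext g; rw [map_mul, map_mul]; rfl
      rw [this]
      exact hx.mul hy

/-- Pointwise algebraic identity: the double sum of traces is the trace of `B B*`. -/
lemma aux_pointwise (r : ℕ) (π : G →* unitary (V →L[ℂ] V)) (S : Finset (FreeGroup (Fin r)))
    (a : FreeGroup (Fin r) → ℂ) (g : Fin r → G) :
    ∑ γ ∈ S, ∑ γ' ∈ S,
      LinearMap.trace ℂ V ((π (FreeGroup.lift g (γ' * γ⁻¹)) : V →L[ℂ] V) : V →ₗ[ℂ] V)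
        * a γ' * (starRingEnd ℂ) (a γ)
    = LinearMap.trace ℂ V
        ((((∑ γ ∈ S, a γ • (π (FreeGroup.lift g γ) : V →L[ℂ] V)) *
          star (∑ γ ∈ S, a γ • (π (FreeGroup.lift g γ) : V →L[ℂ] V))) : V →L[ℂ] V) : V →ₗ[ℂ] V) := by
  have hT : ∀ x y : FreeGroup (Fin r),
      (π (FreeGroup.lift g x) : V →L[ℂ] V) * (π (FreeGroup.lift g y) : V →L[ℂ] V)
        = (π (FreeGroup.lift g (x * y)) : V →L[ℂ] V) := by
    intro x y; rw [map_mul, map_mul]; rfl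
  have hstar : ∀ x : FreeGroup (Fin r),
      star (π (FreeGroup.lift g x) : V →L[ℂ] V) = (π (FreeGroup.lift g x⁻¹) : V →L[ℂ] V) := by
    intro x; rw [map_inv, map_inv, ← Unitary.star_eq_inv, Unitary.coe_star]
  have hAA : (∑ γ ∈ S, a γ • (π (FreeGroup.lift g γ) : V →L[ℂ] V)) *
      star (∑ γ ∈ S, a γ • (π (FreeGroup.lift g γ) : V →L[ℂ] V))
      = ∑ γ' ∈ S, ∑ γ ∈ S,
          (a γ' * (starRingEnd ℂ) (a γ)) • (π (FreeGroup.lift g (γ' * γ⁻¹)) : V →L[ℂ] V) := by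
    rw [star_sum, Finset.sum_mul_sum]
    refine Finset.sum_congr rfl fun γ' _ => Finset.sum_congr rfl fun γ _ => ?_
    rw [star_smul, smul_mul_smul_comm, hstar γ, hT]
    rfl
  rw [hAA, Finset.sum_comm]
  push_cast
  rw [map_sum]
  refine Finset.sum_congr rfl fun γ _ => ?_
  rw [map_sum]
  refine Finset.sum_congr rfl fun γ' _ => ?_
  rw [_root_.map_smul]
  simp only [smul_eq_mul]
  ring

end Aux

/-- For a compact Hausdorff group `G` with Haar probability measure `μ`
and a continuous finite-dimensional unitary representation `π` of `G` on a nonzero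
complex inner product space `V`, the function
`τ_{G,π}(w) = ∫_{G^r} tr(π(w(g))) dμ^r(g)` is positive definite on `F_r`. -/
theorem tau_isPositiveDefinite {G : Type*} [Group G] [TopologicalSpace G] [IsTopologicalGroup G]
    [CompactSpace G] [T2Space G] [MeasurableSpace G] [BorelSpace G]
    (μ : Measure G) [μ.IsHaarMeasure] [IsProbabilityMeasure μ]
    (r : ℕ) (hr : 1 ≤ r)
    {V : Type*} [NormedAddCommGroup V] [InnerProductSpace ℂ V] [FiniteDimensional ℂ V]
    [Nontrivial V]
    (π : G →* unitary (V →L[ℂ] V)) (hπ : Continuous fun g : G => (π g : V →L[ℂ] V)) :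
    IsPositiveDefinite (fun w : FreeGroup (Fin r) =>
      ∫ g : Fin r → G, LinearMap.trace ℂ V ((π (FreeGroup.lift g w) : V →L[ℂ] V) : V →ₗ[ℂ] V)
        ∂(Measure.pi fun _ => μ)) := by
  classical
  intro S a
  set ν : Measure (Fin r → G) := Measure.pi fun _ => μ with hν
  set Tc : (V →L[ℂ] V) →L[ℂ] ℂ :=
    LinearMap.toContinuousLinearMap
      ((LinearMap.trace ℂ V).comp (ContinuousLinearMap.coeLM ℂ)) with hTc
  set F : FreeGroup (Fin r) → (Fin r → G) → ℂ :=
    fun w g => LinearMap.trace ℂ V ((π (FreeGroup.lift g w) : V →L[ℂ] V) : V →ₗ[ℂ] V) with hF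
  have hFmeas : ∀ w, StronglyMeasurable (F w) := fun w =>
    Tc.continuous.comp_stronglyMeasurable (aux_phi_stronglyMeasurable r π hπ w)
  have hFint : ∀ w, Integrable (F w) ν := by
    intro w
    refine ⟨(hFmeas w).aestronglyMeasurable, HasFiniteIntegral.of_bounded (C := ‖Tc‖) ?_⟩
    filter_upwards with g
    calc ‖F w g‖ = ‖Tc (π (FreeGroup.lift g w) : V →L[ℂ] V)‖ := rfl
      _ ≤ ‖Tc‖ * ‖(π (FreeGroup.lift g w) : V →L[ℂ] V)‖ := Tc.le_opNorm _
      _ = ‖Tc‖ := by rw [CStarRing.norm_coe_unitary, mul_one]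
  have hint2 : ∀ γ γ' : FreeGroup (Fin r),
      Integrable (fun g => F (γ' * γ⁻¹) g * a γ' * (starRingEnd ℂ) (a γ)) ν := by
    intro γ γ'
    simpa only [mul_assoc] using
      (hFint (γ' * γ⁻¹)).mul_const (a γ' * (starRingEnd ℂ) (a γ))
  have step1 : ∑ γ ∈ S, ∑ γ' ∈ S, (∫ g, F (γ' * γ⁻¹) g ∂ν) * a γ' * (starRingEnd ℂ) (a γ)
      = ∫ g, ∑ γ ∈ S, ∑ γ' ∈ S, F (γ' * γ⁻¹) g * a γ' * (starRingEnd ℂ) (a γ) ∂ν := by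
    rw [integral_finset_sum S fun γ _ => integrable_finset_sum S fun γ' _ => hint2 γ γ']
    refine Finset.sum_congr rfl fun γ _ => ?_
    rw [integral_finset_sum S fun γ' _ => hint2 γ γ']
    refine Finset.sum_congr rfl fun γ' _ => ?_
    rw [← integral_mul_const, ← integral_mul_const]
  have step2 : ∀ g : Fin r → G,
      ∑ γ ∈ S, ∑ γ' ∈ S, F (γ' * γ⁻¹) g * a γ' * (starRingEnd ℂ) (a γ)
      = LinearMap.trace ℂ V
          ((((∑ γ ∈ S, a γ • (π (FreeGroup.lift g γ) : V →L[ℂ] V)) *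
            star (∑ γ ∈ S, a γ • (π (FreeGroup.lift g γ) : V →L[ℂ] V))) : V →L[ℂ] V) : V →ₗ[ℂ] V) :=
    fun g => aux_pointwise r π S a g
  show (0 : ℂ) ≤ ∑ γ ∈ S, ∑ γ' ∈ S, (∫ g, F (γ' * γ⁻¹) g ∂ν) * a γ' * (starRingEnd ℂ) (a γ)
  rw [step1]
  have hptwise : ∀ g : Fin r → G,
      0 ≤ ∑ γ ∈ S, ∑ γ' ∈ S, F (γ' * γ⁻¹) g * a γ' * (starRingEnd ℂ) (a γ) := by
    intro g
    rw [step2 g]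
    exact aux_trace_nonneg _
  have heq : (fun g : Fin r → G =>
      ∑ γ ∈ S, ∑ γ' ∈ S, F (γ' * γ⁻¹) g * a γ' * (starRingEnd ℂ) (a γ))
      = fun g => ((∑ γ ∈ S, ∑ γ' ∈ S,
          F (γ' * γ⁻¹) g * a γ' * (starRingEnd ℂ) (a γ)).re : ℂ) := by
    funext g
    obtain ⟨h1, h2⟩ := Complex.le_def.mp (hptwise g)
    apply Complex.ext
    · rfl
    · simpa using h2.symm
  have hcast : (∫ g, ((∑ γ ∈ S, ∑ γ' ∈ S,
        F (γ' * γ⁻¹) g * a γ' * (starRingEnd ℂ) (a γ)).re : ℂ) ∂ν)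
      = ((∫ g, (∑ γ ∈ S, ∑ γ' ∈ S,
        F (γ' * γ⁻¹) g * a γ' * (starRingEnd ℂ) (a γ)).re ∂ν : ℝ) : ℂ) := integral_ofReal
  rw [heq, hcast, Complex.zero_le_real]
  apply integral_nonneg
  intro g
  have := Complex.le_def.mp (hptwise g)
  simpa using this.1
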